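/- arXiv:1202.6023 — 2 statements merged into one kernel-verified Lean document; each statement's English description precedes it below -/
import Mathlib

section
/- Let Λ ⊆ ℝ^N be a non-periodic Delone set. If Λ is linearly repetitive (LR), then Λ satisfies uniformity of return words (U), i.e. sup{λ(L_P) : P a ball pattern on Λ} < ∞, where λ(L_P) is the supremum of the distortions of the Voronoi cells of the locater set L_P. -/
open Filter MeasureTheory Bornology
open scoped ENNReal

noncomputable section

/-- Euclidean space `ℝ^N`. -/
abbrev Euc (N : ℕ) := EuclideanSpace ℝ (Fin N)

/-- The packing radius of a set: half of the infimum of distances between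
distinct points (`⊤` if no such pair exists). -/
def rPack {N : ℕ} (Λ : Set (Euc N)) : ℝ≥0∞ :=
  ⨅ (x ∈ Λ) (y ∈ Λ) (_ : x ≠ y), edist x y / 2

/-- The covering radius of a set: the supremum over all points of the space of
the distance to the set. -/
def rCov {N : ℕ} (Λ : Set (Euc N)) : ℝ≥0∞ :=
  ⨆ p : Euc N, EMetric.infEdist p Λ

/-- A set is uniformly discrete if its packing radius is positive. -/
def UniformlyDiscrete {N : ℕ} (Λ : Set (Euc N)) : Prop := 0 < rPack Λ

/-- A set is relatively dense if its covering radius is finite. -/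
def RelativelyDense {N : ℕ} (Λ : Set (Euc N)) : Prop := rCov Λ < ⊤

/-- A Delone set is a uniformly discrete and relatively dense set. -/
def IsDelone {N : ℕ} (Λ : Set (Euc N)) : Prop :=
  UniformlyDiscrete Λ ∧ RelativelyDense Λ

/-- Λ is non-periodic if no nonzero translate of Λ equals Λ. -/
def NonPeriodic {N : ℕ} (Λ : Set (Euc N)) : Prop :=
  ∀ t : Euc N, t ≠ 0 → (fun p => p - t) '' Λ ≠ Λ

/-- The patch of the ball pattern `(x, R)`: `(Λ - x) ∩ B_R`. -/
def patch {N : ℕ} (Λ : Set (Euc N)) (x : Euc N) (R : ℝ) : Set (Euc N) :=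
  ((fun y => y - x) '' Λ) ∩ Metric.closedBall 0 R

/-- The locater set of the ball pattern `(x, R)`: the set of points of Λ whose
`R`-patch agrees with that of `x`. -/
def locSet {N : ℕ} (Λ : Set (Euc N)) (x : Euc N) (R : ℝ) : Set (Euc N) :=
  {y ∈ Λ | patch Λ y R = patch Λ x R}

/-- Λ is repetitive if the locater set of every ball pattern is relatively dense. -/
def Repetitive {N : ℕ} (Λ : Set (Euc N)) : Prop :=
  ∀ x ∈ Λ, ∀ R : ℝ, 0 < R → RelativelyDense (locSet Λ x R)

/-- `L_P(Q)`: the points of the locater set of `(x,R)` whose `R`-ball lies inside `Q`. -/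
def locIn {N : ℕ} (Λ : Set (Euc N)) (x : Euc N) (R : ℝ) (Q : Set (Euc N)) :
    Set (Euc N) :=
  {y ∈ locSet Λ x R | Metric.closedBall y R ⊆ Q}

/-- `♯_P Q`: the number of copies of the ball pattern `P = (x,R)` in `Q`. -/
def countP {N : ℕ} (Λ : Set (Euc N)) (x : Euc N) (R : ℝ) (Q : Set (Euc N)) : ℕ :=
  (locIn Λ x R Q).ncard

/-- `♯'_P Q`: the maximal number of completely disjoint copies of `P = (x,R)` in `Q`. -/
def countP' {N : ℕ} (Λ : Set (Euc N)) (x : Euc N) (R : ℝ) (Q : Set (Euc N)) : ℕ :=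
  sSup {n : ℕ | ∃ A : Finset (Euc N), ↑A ⊆ locIn Λ x R Q ∧
    (∀ u ∈ A, ∀ v ∈ A, u ≠ v → 2 * R < dist u v) ∧ A.card = n}

/-- The cube with corner `a` and sidelength `s`. -/
def cube {N : ℕ} (a : Euc N) (s : ℝ) : Set (Euc N) :=
  {p | ∀ i, a i ≤ p i ∧ p i ≤ a i + s}

/-- The filter describing cubes `C` with `|C| → ∞`: arbitrary corner, sidelength
tending to infinity. -/
def cubeFilter (N : ℕ) : Filter (Euc N × ℝ) := (⊤ : Filter (Euc N)) ×ˢ atTop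

/-- The Lebesgue measure `|B_R|` of a closed ball of radius `R` in `ℝ^N`. -/
def ballVol (N : ℕ) (R : ℝ) : ℝ := (volume (Metric.closedBall (0 : Euc N) R)).toReal

/-- The lower density `ν(P)` of the ball pattern `P = (x,R)`:
`liminf_{|C|→∞} ♯_P C · |B_R| / |C|` over cubes `C`. -/
def nu {N : ℕ} (Λ : Set (Euc N)) (x : Euc N) (R : ℝ) : ℝ :=
  liminf (fun cs : Euc N × ℝ =>
    (countP Λ x R (cube cs.1 cs.2) : ℝ) * ballVol N R / cs.2 ^ N) (cubeFilter N)

/-- The lower reduced density `ν'(P)` of the ball pattern `P = (x,R)`: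
`liminf_{|C|→∞} ♯'_P C · |B_R| / |C|` over cubes `C`. -/
def nu' {N : ℕ} (Λ : Set (Euc N)) (x : Euc N) (R : ℝ) : ℝ :=
  liminf (fun cs : Euc N × ℝ =>
    (countP' Λ x R (cube cs.1 cs.2) : ℝ) * ballVol N R / cs.2 ^ N) (cubeFilter N)

/-- `w = inf {ν(P) : r(P) ≥ 1}`. -/
def wPW {N : ℕ} (Λ : Set (Euc N)) : ℝ :=
  sInf {v | ∃ x ∈ Λ, ∃ R : ℝ, 1 ≤ R ∧ v = nu Λ x R}

/-- `w' = inf {ν'(P) : r(P) ≥ 1}`. -/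
def wPQ {N : ℕ} (Λ : Set (Euc N)) : ℝ :=
  sInf {v | ∃ x ∈ Λ, ∃ R : ℝ, 1 ≤ R ∧ v = nu' Λ x R}

/-- Positivity of weights (PW). -/
def PW {N : ℕ} (Λ : Set (Euc N)) : Prop := 0 < wPW Λ

/-- Positivity of quasiweights (PQ). -/
def PQ {N : ℕ} (Λ : Set (Euc N)) : Prop := 0 < wPQ Λ

/-- A function on (bounded) subsets of `ℝ^N` is subadditive if
`F(Q₁ ∪ Q₂) ≤ F(Q₁) + F(Q₂)` for disjoint bounded `Q₁, Q₂`. -/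
def SubadditiveFn {N : ℕ} (F : Set (Euc N) → ℝ) : Prop :=
  ∀ Q₁ Q₂ : Set (Euc N), IsBounded Q₁ → IsBounded Q₂ → Disjoint Q₁ Q₂ →
    F (Q₁ ∪ Q₂) ≤ F Q₁ + F Q₂

/-- A function on (bounded) subsets is Λ-invariant if `F(Q) = F(t + Q)` whenever
`t + (Q ∩ Λ) = (t + Q) ∩ Λ`. -/
def InvariantFn {N : ℕ} (Λ : Set (Euc N)) (F : Set (Euc N) → ℝ) : Prop :=
  ∀ (t : Euc N) (Q : Set (Euc N)), IsBounded Q →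
    (fun p => t + p) '' (Q ∩ Λ) = ((fun p => t + p) '' Q) ∩ Λ →
    F Q = F ((fun p => t + p) '' Q)

/-- Λ satisfies the subadditive ergodic theorem (SET) if for every subadditive
Λ-invariant function `F` the limit `lim_{|C|→∞} F(C)/|C|` over cubes exists. -/
def SET {N : ℕ} (Λ : Set (Euc N)) : Prop :=
  ∀ F : Set (Euc N) → ℝ, SubadditiveFn F → InvariantFn Λ F →
    ∃ L : ℝ, Tendsto (fun cs : Euc N × ℝ => F (cube cs.1 cs.2) / cs.2 ^ N)
      (cubeFilter N) (nhds L)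

/-- Linear repetitivity (LR): `sup {r_cov(L_P)/r(P) : r(P) ≥ 1} < ∞`. -/
def LR {N : ℕ} (Λ : Set (Euc N)) : Prop :=
  (⨆ (x ∈ Λ) (R : ℝ) (_ : 1 ≤ R), rCov (locSet Λ x R) / ENNReal.ofReal R) < ⊤

/-- The repulsion property (RP): `inf {r_pack(L_P)/r(P) : P a ball pattern} > 0`. -/
def RP {N : ℕ} (Λ : Set (Euc N)) : Prop :=
  0 < ⨅ (x ∈ Λ) (R : ℝ) (_ : 0 < R), rPack (locSet Λ x R) / ENNReal.ofReal R

/-- The Voronoi cell of `x` with respect to `Γ`. -/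
def voronoiCell {N : ℕ} (Γ : Set (Euc N)) (x : Euc N) : Set (Euc N) :=
  {p | ∀ y ∈ Γ, dist p x ≤ dist p y}

/-- The inner radius of a set `V` around `x`. -/
def rIn {N : ℕ} (x : Euc N) (V : Set (Euc N)) : ℝ≥0∞ :=
  sSup {R : ℝ≥0∞ | EMetric.closedBall x R ⊆ V}

/-- The outer radius of a set `V` around `x`. -/
def rOut {N : ℕ} (x : Euc N) (V : Set (Euc N)) : ℝ≥0∞ :=
  sInf {R : ℝ≥0∞ | V ⊆ EMetric.closedBall x R}

/-- The distortion `λ(V) = r_out(V)/r_in(V)` of a set `V` around `x`. -/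
def distortion {N : ℕ} (x : Euc N) (V : Set (Euc N)) : ℝ≥0∞ := rOut x V / rIn x V

/-- The distortion of a discrete set: the supremum of the distortions of its
Voronoi cells. -/
def setDistortion {N : ℕ} (Γ : Set (Euc N)) : ℝ≥0∞ :=
  ⨆ x ∈ Γ, distortion x (voronoiCell Γ x)

/-- Uniformity of return words (U): the distortions of all locater sets of Λ are
uniformly bounded. -/
def URW {N : ℕ} (Λ : Set (Euc N)) : Prop :=
  (⨆ (x ∈ Λ) (R : ℝ) (_ : 0 < R), setDistortion (locSet Λ x R)) < ⊤

end

noncomputable section Auxil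

variable {N : ℕ}

lemma mem_patch' {Λ : Set (Euc N)} {x p : Euc N} {R : ℝ} :
    p ∈ patch Λ x R ↔ p + x ∈ Λ ∧ ‖p‖ ≤ R := by
  simp only [patch, Set.mem_inter_iff, Set.mem_image, Metric.mem_closedBall,
    dist_zero_right]
  constructor
  · rintro ⟨⟨w, hw, rfl⟩, h2⟩
    exact ⟨by simpa using hw, h2⟩
  · rintro ⟨h1, h2⟩
    exact ⟨⟨p + x, h1, by abel⟩, h2⟩

lemma patch_inter' {Λ : Set (Euc N)} {y : Euc N} {R R' : ℝ} (h : R ≤ R') :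
    patch Λ y R = patch Λ y R' ∩ Metric.closedBall 0 R := by
  simp only [patch, Set.inter_assoc,
    Set.inter_eq_self_of_subset_right (Metric.closedBall_subset_closedBall h)]

lemma locSet_anti' {Λ : Set (Euc N)} {x : Euc N} {R R' : ℝ} (h : R ≤ R') :
    locSet Λ x R' ⊆ locSet Λ x R := by
  rintro y ⟨hy1, hy2⟩
  exact ⟨hy1, by rw [patch_inter' h, hy2, ← patch_inter' h]⟩

lemma locSet_subset' {Λ : Set (Euc N)} {x : Euc N} {R : ℝ} :
    locSet Λ x R ⊆ Λ := fun y hy => hy.1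

lemma rCov_anti' {Γ Γ' : Set (Euc N)} (h : Γ ⊆ Γ') : rCov Γ' ≤ rCov Γ :=
  iSup_mono fun p => EMetric.infEdist_anti h

lemma rPack_anti' {Γ Γ' : Set (Euc N)} (h : Γ ⊆ Γ') : rPack Γ' ≤ rPack Γ := by
  refine le_iInf fun x => le_iInf fun hx => le_iInf fun y => le_iInf fun hy =>
    le_iInf fun hne => ?_
  exact iInf₂_le_of_le x (h hx) (iInf₂_le_of_le y (h hy) (iInf_le _ hne))

lemma rOut_le_rCov' {Γ : Set (Euc N)} {x : Euc N} :
    rOut x (voronoiCell Γ x) ≤ rCov Γ := by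
  apply sInf_le
  intro p hp
  change edist p x ≤ _
  calc edist p x ≤ EMetric.infEdist p Γ := by
        refine EMetric.le_infEdist.mpr ?_
        intro y hy
        rw [edist_dist, edist_dist]
        exact ENNReal.ofReal_le_ofReal (hp y hy)
    _ ≤ rCov Γ := le_iSup (fun p => EMetric.infEdist p Γ) p

lemma rPack_le_rIn' {Γ : Set (Euc N)} {x : Euc N} (hx : x ∈ Γ) :
    rPack Γ ≤ rIn x (voronoiCell Γ x) := by
  apply le_sSup
  intro p hp
  change edist p x ≤ _ at hp
  intro y hy
  by_cases hxy : y = x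
  · subst hxy; rfl
  have hle : rPack Γ ≤ edist x y / 2 :=
    iInf₂_le_of_le x hx (iInf₂_le_of_le y hy (iInf_le _ (Ne.symm hxy)))
  have h1 : edist p x ≤ edist x y / 2 := hp.trans hle
  have h2 : dist p x ≤ dist x y / 2 := by
    have e : ENNReal.ofReal (dist x y) / 2 = ENNReal.ofReal (dist x y / 2) := by
      rw [ENNReal.ofReal_div_of_pos two_pos, ENNReal.ofReal_ofNat]
    rw [edist_dist, edist_dist, e] at h1
    exact (ENNReal.ofReal_le_ofReal_iff (by positivity)).mp h1
  have h3 := dist_triangle x p y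
  rw [dist_comm x p] at h3
  linarith

lemma setDistortion_le' {Γ : Set (Euc N)} : setDistortion Γ ≤ rCov Γ / rPack Γ :=
  iSup₂_le fun _ hx => ENNReal.div_le_div rOut_le_rCov' (rPack_le_rIn' hx)

lemma key_repulsion {Λ : Set (Euc N)} (hnp : NonPeriodic Λ)
    {u : ℝ} (hu1 : 1 ≤ u)
    (hLRu : ∀ q ∈ Λ, ∀ r : ℝ, 1 ≤ r → rCov (locSet Λ q r) ≤ ENNReal.ofReal (u * r))
    {x : Euc N} {R : ℝ} (hRu : 2 * u ≤ R)
    {y z : Euc N} (hy : y ∈ locSet Λ x R) (hz : z ∈ locSet Λ x R)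
    (hne : y ≠ z) : R / (4 * u) ≤ dist y z := by
  by_contra hlt
  push_neg at hlt
  have hu0 : (0:ℝ) < u := lt_of_lt_of_le one_pos hu1
  have hR0 : (0:ℝ) < R := by nlinarith
  have hpe : patch Λ y R = patch Λ z R := hy.2.trans hz.2.symm
  -- Step A: t := z - y is a period of Λ on the R-ball around y
  have stepA : ∀ w : Euc N, dist w y ≤ R → (w ∈ Λ ↔ w + (z - y) ∈ Λ) := by
    intro w hw
    have h1 : (w - y) ∈ patch Λ y R ↔ (w - y) ∈ patch Λ z R := by rw [hpe]
    simp only [mem_patch'] at h1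
    have hn : ‖w - y‖ ≤ R := by rwa [← dist_eq_norm]
    have e1 : w - y + y = w := by abel
    have e2 : w - y + z = w + (z - y) := by abel
    rw [e1, e2] at h1
    constructor
    · intro hwΛ; exact (h1.mp ⟨hwΛ, hn⟩).1
    · intro hwΛ; exact (h1.mpr ⟨hwΛ, hn⟩).1
  -- norm of the almost-period
  have hεr : ‖z - y‖ < R / (4 * u) := by rw [← dist_eq_norm, dist_comm]; exact hlt
  have hε4 : ‖z - y‖ < R / 4 := by
    refine hεr.trans_le ?_
    gcongr
    · linarith
  -- propagation: for any q ∈ Λ, both q + t and q - t are in Λ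
  have main : ∀ q ∈ Λ, q + (z - y) ∈ Λ ∧ q - (z - y) ∈ Λ := by
    intro q hq
    set r : ℝ := R / (2 * u) with hrdef
    have hr1 : 1 ≤ r := by
      rw [hrdef, le_div_iff₀ (by positivity)]; linarith
    have hur : u * r = R / 2 := by rw [hrdef]; field_simp
    have hcovq := hLRu q hq r hr1
    rw [hur] at hcovq
    have hinf : EMetric.infEdist y (locSet Λ q r) < ENNReal.ofReal (5 * R / 8) := by
      refine lt_of_le_of_lt (le_trans ?_ hcovq) ?_
      · exact le_iSup (fun p => EMetric.infEdist p (locSet Λ q r)) y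
      · exact (ENNReal.ofReal_lt_ofReal_iff (by positivity)).mpr (by linarith)
    obtain ⟨q', hq'mem, hq'd⟩ := EMetric.infEdist_lt_iff.mp hinf
    have hdq' : dist y q' < 5 * R / 8 := edist_lt_ofReal.mp hq'd
    have hq'Λ : q' ∈ Λ := hq'mem.1
    have shift : ∀ p : Euc N, ‖p‖ ≤ r → (q + p ∈ Λ ↔ q' + p ∈ Λ) := by
      intro p hp
      have h1 : p ∈ patch Λ q' r ↔ p ∈ patch Λ q r := by rw [hq'mem.2]
      simp only [mem_patch'] at h1
      rw [add_comm q p, add_comm q' p]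
      exact ⟨fun h => (h1.mpr ⟨h, hp⟩).1, fun h => (h1.mp ⟨h, hp⟩).1⟩
    have htr : ‖z - y‖ ≤ r := by
      refine le_of_lt (hεr.trans_le ?_)
      rw [hrdef]; gcongr; · linarith
    constructor
    · -- forward
      have h2 := shift (z - y) htr
      have h3 := stepA q' (by rw [dist_comm]; linarith)
      exact h2.mpr (h3.mp hq'Λ)
    · -- backward
      have h2 := shift (-(z - y)) (by rwa [norm_neg])
      have hdd : dist (q' - (z - y)) y ≤ R := by
        have t1 := dist_triangle (q' - (z - y)) q' y
        have t2 : dist (q' - (z - y)) q' = ‖z - y‖ := by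
          rw [dist_eq_norm, show q' - (z - y) - q' = -(z - y) by abel, norm_neg]
        rw [t2] at t1
        rw [dist_comm] at hdq'
        linarith
      have h3 := stepA (q' - (z - y)) hdd
      rw [sub_add_cancel] at h3
      have h4 : q' - (z - y) ∈ Λ := h3.mpr hq'Λ
      have h5 : q' + -(z - y) ∈ Λ := by rwa [← sub_eq_add_neg]
      have h6 : q + -(z - y) ∈ Λ := h2.mpr h5
      rwa [← sub_eq_add_neg] at h6
  -- conclude Λ is periodic, contradiction
  refine hnp (z - y) (sub_ne_zero.mpr (Ne.symm hne)) ?_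
  ext w
  constructor
  · rintro ⟨q, hq, rfl⟩
    exact (main q hq).2
  · intro hw
    exact ⟨w + (z - y), (main w hw).1, add_sub_cancel_right w (z - y)⟩

end Auxil

/-- A non-periodic linearly repetitive Delone set satisfies
uniformity of return words (U). -/
theorem lr_implies_u {N : ℕ} (hN : 0 < N) (Λ : Set (Euc N))
    (hΛ : IsDelone Λ) (hnp : NonPeriodic Λ) (hLR : LR Λ) :
    URW Λ := by
  have hUD : 0 < rPack Λ := hΛ.1
  set U : ℝ≥0∞ := ⨆ (x ∈ Λ) (R : ℝ) (_ : 1 ≤ R), rCov (locSet Λ x R) / ENNReal.ofReal R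
    with hUdef
  have hUlt : U < ⊤ := hLR
  set u : ℝ := max 1 (U.toReal + 1) with hudef
  have hu1 : (1:ℝ) ≤ u := le_max_left _ _
  have hu0 : (0:ℝ) < u := lt_of_lt_of_le one_pos hu1
  have hLRu : ∀ q ∈ Λ, ∀ r : ℝ, 1 ≤ r → rCov (locSet Λ q r) ≤ ENNReal.ofReal (u * r) := by
    intro q hq r hr
    have h1 : rCov (locSet Λ q r) / ENNReal.ofReal r ≤ U := by
      rw [hUdef]
      exact le_iSup₂_of_le q hq (le_iSup₂_of_le r hr le_rfl)
    have h2 : rCov (locSet Λ q r) ≤ U * ENNReal.ofReal r := by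
      rwa [ENNReal.div_le_iff_le_mul
        (Or.inl (by simp only [ne_eq, ENNReal.ofReal_eq_zero, not_le]; linarith))
        (Or.inl ENNReal.ofReal_ne_top)] at h1
    have h3 : U ≤ ENNReal.ofReal u := by
      rw [← ENNReal.ofReal_toReal hUlt.ne]
      exact ENNReal.ofReal_le_ofReal (le_max_of_le_right (by linarith))
    calc rCov (locSet Λ q r) ≤ U * ENNReal.ofReal r := h2
      _ ≤ ENNReal.ofReal u * ENNReal.ofReal r := mul_le_mul_left h3 _
      _ = ENNReal.ofReal (u * r) := (ENNReal.ofReal_mul hu0.le).symm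
  obtain ⟨r0, hr00, hr0⟩ : ∃ r0 : ℝ, 0 < r0 ∧ ENNReal.ofReal r0 ≤ rPack Λ := by
    rcases eq_top_or_lt_top (rPack Λ) with h | h
    · exact ⟨1, one_pos, by simp [h]⟩
    · exact ⟨(rPack Λ).toReal, ENNReal.toReal_pos hUD.ne' h.ne,
        le_of_eq (ENNReal.ofReal_toReal h.ne)⟩
  set C : ℝ := 8 * u ^ 2 + 2 * u ^ 2 / r0 with hCdef
  unfold URW
  refine lt_of_le_of_lt ?_ (ENNReal.ofReal_lt_top (r := C))
  refine iSup₂_le fun x hx => iSup₂_le fun R hR => ?_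
  have hsd := setDistortion_le' (Γ := locSet Λ x R)
  rcases le_or_gt (2 * u) R with hcase | hcase
  · -- large R : use repulsion
    have hcov : rCov (locSet Λ x R) ≤ ENNReal.ofReal (u * R) := hLRu x hx R (by nlinarith)
    have hpack : ENNReal.ofReal (R / (8 * u)) ≤ rPack (locSet Λ x R) := by
      refine le_iInf fun y => le_iInf fun hy => le_iInf fun z => le_iInf fun hz =>
        le_iInf fun hyz => ?_
      have hd : R / (4 * u) ≤ dist y z := key_repulsion hnp hu1 hLRu hcase hy hz hyz
      have hde : ENNReal.ofReal (R / (4 * u)) ≤ edist y z := by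
        rw [edist_dist]; exact ENNReal.ofReal_le_ofReal hd
      calc ENNReal.ofReal (R / (8 * u)) = ENNReal.ofReal (R / (4 * u)) / 2 := by
            rw [show R / (8 * u) = (R / (4 * u)) / 2 by ring,
              ENNReal.ofReal_div_of_pos two_pos, ENNReal.ofReal_ofNat]
        _ ≤ edist y z / 2 := ENNReal.div_le_div_right hde 2
    calc setDistortion (locSet Λ x R) ≤ rCov (locSet Λ x R) / rPack (locSet Λ x R) := hsd
      _ ≤ ENNReal.ofReal (u * R) / ENNReal.ofReal (R / (8 * u)) :=
          ENNReal.div_le_div hcov hpack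
      _ = ENNReal.ofReal ((u * R) / (R / (8 * u))) :=
          (ENNReal.ofReal_div_of_pos (by positivity)).symm
      _ ≤ ENNReal.ofReal C := by
          refine ENNReal.ofReal_le_ofReal ?_
          rw [show (u * R) / (R / (8 * u)) = 8 * u ^ 2 by field_simp, hCdef]
          have : (0:ℝ) ≤ 2 * u ^ 2 / r0 := by positivity
          linarith
  · -- small R
    have hcov : rCov (locSet Λ x R) ≤ ENNReal.ofReal (2 * u ^ 2) := by
      rcases le_or_gt 1 R with h1 | h1
      · exact (hLRu x hx R h1).trans (ENNReal.ofReal_le_ofReal (by nlinarith))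
      · calc rCov (locSet Λ x R) ≤ rCov (locSet Λ x 1) := rCov_anti' (locSet_anti' h1.le)
          _ ≤ ENNReal.ofReal (u * 1) := hLRu x hx 1 le_rfl
          _ ≤ ENNReal.ofReal (2 * u ^ 2) := ENNReal.ofReal_le_ofReal (by nlinarith)
    have hpack : ENNReal.ofReal r0 ≤ rPack (locSet Λ x R) :=
      hr0.trans (rPack_anti' locSet_subset')
    calc setDistortion (locSet Λ x R) ≤ rCov (locSet Λ x R) / rPack (locSet Λ x R) := hsd
      _ ≤ ENNReal.ofReal (2 * u ^ 2) / ENNReal.ofReal r0 := ENNReal.div_le_div hcov hpack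
      _ = ENNReal.ofReal (2 * u ^ 2 / r0) := (ENNReal.ofReal_div_of_pos hr00).symm
      _ ≤ ENNReal.ofReal C := ENNReal.ofReal_le_ofReal (by rw [hCdef]; nlinarith [sq_nonneg u])
end

section
/- For any Delone set Λ ⊆ ℝ^N and any ball pattern P on Λ, the lower reduced density satisfies ν'(P) ≤ |B₁| · (√N / 2)^N, where |B₁| is the Lebesgue measure of the closed unit ball in ℝ^N. -/
open Filter MeasureTheory Bornology
open scoped ENNReal

noncomputable section NuAux

lemma volume_cube_eq {N : ℕ} (a : Euc N) {s : ℝ} (hs : 0 ≤ s) :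
    volume (cube a s) = ENNReal.ofReal (s ^ N) := by
  have h : cube a s = (MeasurableEquiv.toLp 2 (Fin N → ℝ)).symm ⁻¹'
      (Set.univ.pi fun i => Set.Icc (a i) (a i + s)) := by
    ext p
    constructor
    · intro hp i _
      exact ⟨(hp i).1, (hp i).2⟩
    · intro hp i
      exact hp i (Set.mem_univ i)
  rw [h, (EuclideanSpace.volume_preserving_symm_measurableEquiv_toLp (Fin N)).measure_preimage
    (MeasurableSet.univ_pi fun i => measurableSet_Icc).nullMeasurableSet]
  rw [volume_pi_pi]
  simp [Real.volume_Icc, ENNReal.ofReal_pow hs]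

lemma ballVol_pos (N : ℕ) {R : ℝ} (hR : 0 < R) : 0 < ballVol N R :=
  ENNReal.toReal_pos (Metric.measure_closedBall_pos volume 0 hR).ne'
    measure_closedBall_lt_top.ne

lemma packing_bound {N : ℕ} {R : ℝ} (a : Euc N) {s : ℝ} (hs : 0 ≤ s)
    (A : Finset (Euc N)) (hsub : ∀ y ∈ A, Metric.closedBall y R ⊆ cube a s)
    (hsep : ∀ u ∈ A, ∀ v ∈ A, u ≠ v → 2 * R < dist u v) :
    (A.card : ℝ) * ballVol N R ≤ s ^ N := by
  have hdisj : (A : Set (Euc N)).PairwiseDisjoint fun y => Metric.closedBall y R := by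
    intro u hu v hv huv
    apply Set.disjoint_left.2
    intro p hpu hpv
    have : dist u v ≤ 2 * R := by
      calc dist u v ≤ dist u p + dist p v := dist_triangle u p v
        _ ≤ R + R := add_le_add (Metric.mem_closedBall'.1 hpu) (Metric.mem_closedBall.1 hpv)
        _ = 2 * R := by ring
    exact absurd this (not_le.2 (hsep u hu v hv huv))
  have hmeas := measure_biUnion_finset (μ := volume) hdisj
    (fun y _ => (measurableSet_closedBall : MeasurableSet (Metric.closedBall y R)))
  have hsum : ∑ y ∈ A, volume (Metric.closedBall y R)
      = (A.card : ℝ≥0∞) * volume (Metric.closedBall (0 : Euc N) R) := by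
    rw [Finset.sum_congr rfl fun y _ => volume.addHaar_closedBall_center y R]
    simp [mul_comm]
  have hle : (A.card : ℝ≥0∞) * volume (Metric.closedBall (0 : Euc N) R)
      ≤ ENNReal.ofReal (s ^ N) := by
    rw [← hsum, ← hmeas, ← volume_cube_eq a hs]
    exact measure_mono (Set.iUnion₂_subset hsub)
  have h2 := ENNReal.toReal_mono ENNReal.ofReal_ne_top hle
  rw [ENNReal.toReal_ofReal (by positivity), ENNReal.toReal_mul] at h2
  simpa [ballVol] using h2

lemma countP'_mul_le {N : ℕ} (Λ : Set (Euc N)) (x : Euc N) {R : ℝ} (hR : 0 < R)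
    (a : Euc N) {s : ℝ} (hs : 0 ≤ s) :
    (countP' Λ x R (cube a s) : ℝ) * ballVol N R ≤ s ^ N := by
  set S := {n : ℕ | ∃ A : Finset (Euc N), ↑A ⊆ locIn Λ x R (cube a s) ∧
    (∀ u ∈ A, ∀ v ∈ A, u ≠ v → 2 * R < dist u v) ∧ A.card = n} with hS
  have hmem : ∀ n ∈ S, (n : ℝ) * ballVol N R ≤ s ^ N := by
    rintro n ⟨A, hA, hsep, rfl⟩
    exact packing_bound a hs A (fun y hy => (hA (Finset.mem_coe.2 hy)).2) hsep
  have hne : S.Nonempty := ⟨0, ∅, by simp, by simp, by simp⟩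
  have hbdd : BddAbove S := by
    refine ⟨⌈s ^ N / ballVol N R⌉₊, fun n hn => ?_⟩
    have h1 := hmem n hn
    have h2 : (n : ℝ) ≤ s ^ N / ballVol N R := (le_div_iff₀ (ballVol_pos N hR)).2 h1
    exact_mod_cast h2.trans (Nat.le_ceil _)
  exact hmem _ (Nat.sSup_mem hne hbdd)

lemma nu'_le_one {N : ℕ} (Λ : Set (Euc N)) (x : Euc N) {R : ℝ} (hR : 0 < R) :
    nu' Λ x R ≤ 1 := by
  haveI : Nonempty (Euc N) := ⟨0⟩
  haveI hne : (cubeFilter N).NeBot := by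
    rw [cubeFilter]; exact Filter.prod_neBot.2 ⟨⟨top_ne_bot⟩, atTop_neBot⟩
  have hev : ∀ᶠ cs : Euc N × ℝ in cubeFilter N,
      (countP' Λ x R (cube cs.1 cs.2) : ℝ) * ballVol N R / cs.2 ^ N ∈ Set.Icc (0:ℝ) 1 := by
    have h2 : ∀ᶠ cs : Euc N × ℝ in cubeFilter N, 1 ≤ cs.2 :=
      (eventually_ge_atTop (1:ℝ)).prod_inr ⊤
    filter_upwards [h2] with cs hcs
    have hs0 : (0:ℝ) ≤ cs.2 := le_trans zero_le_one hcs
    have hsp : (0:ℝ) < cs.2 ^ N := pow_pos (lt_of_lt_of_le one_pos hcs) N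
    constructor
    · exact div_nonneg (mul_nonneg (Nat.cast_nonneg _) ENNReal.toReal_nonneg) hsp.le
    · rw [div_le_one hsp]
      exact countP'_mul_le Λ x hR cs.1 hs0
  refine liminf_le_of_frequently_le ?_ ?_
  · exact (hev.mono fun cs h => h.2).frequently
  · exact ⟨0, eventually_map.2 (hev.mono fun cs h => h.1)⟩

lemma one_le_ballVol_mul {N : ℕ} (hN : 0 < N) :
    (1 : ℝ) ≤ ballVol N 1 * (Real.sqrt N / 2) ^ N := by
  set r : ℝ := Real.sqrt N / 2 with hr
  have hr0 : (0:ℝ) ≤ r := by positivity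
  have hsub : cube (WithLp.toLp 2 (fun _ => -(1/2 : ℝ)) : Euc N) 1 ⊆ Metric.closedBall (0 : Euc N) r := by
    intro p hp
    simp only [Metric.mem_closedBall, dist_zero_right]
    rw [EuclideanSpace.norm_eq]
    have hb : ∀ i, ‖p i‖ ^ 2 ≤ (1/2 : ℝ) ^ 2 := by
      intro i
      have h1 : -(1/2 : ℝ) ≤ p i := (hp i).1
      have h2 : p i ≤ -(1/2 : ℝ) + 1 := (hp i).2
      rw [Real.norm_eq_abs, sq_abs]
      nlinarith
    have hsum : ∑ i, ‖p i‖ ^ 2 ≤ (N : ℝ) * (1/2) ^ 2 := by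
      calc ∑ i, ‖p i‖ ^ 2 ≤ ∑ _i : Fin N, (1/2 : ℝ) ^ 2 :=
            Finset.sum_le_sum fun i _ => hb i
        _ = (N : ℝ) * (1/2) ^ 2 := by simp
    calc Real.sqrt (∑ i, ‖p i‖ ^ 2) ≤ Real.sqrt ((N : ℝ) * (1/2) ^ 2) :=
          Real.sqrt_le_sqrt hsum
      _ = r := by
          rw [Real.sqrt_mul (Nat.cast_nonneg N), Real.sqrt_sq (by norm_num : (0:ℝ) ≤ 1/2), hr]
          ring
  have hvol : (1 : ℝ≥0∞) ≤ volume (Metric.closedBall (0 : Euc N) r) := by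
    calc (1 : ℝ≥0∞) = volume (cube (WithLp.toLp 2 (fun _ => -(1/2 : ℝ)) : Euc N) 1) := by
          rw [volume_cube_eq _ zero_le_one]; simp
      _ ≤ _ := measure_mono hsub
  rw [Measure.addHaar_closedBall' volume 0 hr0, finrank_euclideanSpace_fin] at hvol
  have hfin : ENNReal.ofReal (r ^ N) * volume (Metric.closedBall (0 : Euc N) 1) ≠ ⊤ :=
    ENNReal.mul_ne_top ENNReal.ofReal_ne_top measure_closedBall_lt_top.ne
  have h3 := ENNReal.toReal_mono hfin hvol
  rw [ENNReal.toReal_mul, ENNReal.toReal_ofReal (by positivity), ENNReal.toReal_one] at h3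
  calc (1 : ℝ) ≤ r ^ N * (volume (Metric.closedBall (0 : Euc N) 1)).toReal := h3
    _ = ballVol N 1 * r ^ N := by rw [ballVol]; ring

end NuAux


/-- For any Delone set and any ball pattern `P`,
`ν'(P) ≤ |B₁| · (√N/2)^N`. -/
theorem nu'_upper_bound {N : ℕ} (hN : 0 < N) (Λ : Set (Euc N)) (hΛ : IsDelone Λ)
    (x : Euc N) (hx : x ∈ Λ) (R : ℝ) (hR : 0 < R) :
    nu' Λ x R ≤ ballVol N 1 * (Real.sqrt N / 2) ^ N :=
  le_trans (nu'_le_one Λ x hR) (one_le_ballVol_mul hN)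
end
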